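/- arXiv:2003.01387 — 3 statements merged into one kernel-verified Lean document; each statement's English description precedes it below -/
import Mathlib

section
/- For X = (M, g/h) ∈ ℚ₊ × ℚ/ℤ with associated matrix α_X = [[M, g/h],[0,1]], and Y = (N, g'/h') with α_Y similarly, define δ(X,Y) = det(d·α_X·α_Y⁻¹) where d is the smallest positive rational with d·α_X·α_Y⁻¹ having integer entries. Then δ is symmetric: δ(X,Y) = δ(Y,X). -/
open Matrix

/-- A rational matrix has integral entries. -/
def MatIsIntegral (A : Matrix (Fin 2) (Fin 2) ℚ) : Prop :=
  ∀ i j, ∃ z : ℤ, A i j = (z : ℚ)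

theorem hyperdistance_symmetric
    (M N : ℚ) (hM : 0 < M) (hN : 0 < N) (r r' : ℚ)
    (αX αY : Matrix (Fin 2) (Fin 2) ℚ)
    (hX : αX = !![M, r; 0, 1]) (hY : αY = !![N, r'; 0, 1])
    (dXY dYX : ℚ) (hdXY : 0 < dXY) (hdYX : 0 < dYX)
    (hIXY : MatIsIntegral (dXY • (αX * αY⁻¹)))
    (hminXY : ∀ e : ℚ, 0 < e → MatIsIntegral (e • (αX * αY⁻¹)) → dXY ≤ e)
    (hIYX : MatIsIntegral (dYX • (αY * αX⁻¹)))
    (hminYX : ∀ e : ℚ, 0 < e → MatIsIntegral (e • (αY * αX⁻¹)) → dYX ≤ e) :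
    (dXY • (αX * αY⁻¹)).det = (dYX • (αY * αX⁻¹)).det := by
  have hM0 : M ≠ 0 := ne_of_gt hM
  have hN0 : N ≠ 0 := ne_of_gt hN
  have hYinv : αY⁻¹ = !![1/N, -r'/N; 0, 1] := by
    rw [hY]
    apply Matrix.inv_eq_right_inv
    ext i j
    fin_cases i <;> fin_cases j <;>
      simp [Matrix.mul_apply, Fin.sum_univ_two] <;> field_simp <;> ring
  have hXinv : αX⁻¹ = !![1/M, -r/M; 0, 1] := by
    rw [hX]
    apply Matrix.inv_eq_right_inv
    ext i j
    fin_cases i <;> fin_cases j <;>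
      simp [Matrix.mul_apply, Fin.sum_univ_two] <;> field_simp <;> ring
  have hA : αX * αY⁻¹ = !![M/N, r - M*r'/N; 0, 1] := by
    rw [hX, hYinv]
    ext i j
    fin_cases i <;> fin_cases j <;>
      simp [Matrix.mul_apply, Fin.sum_univ_two] <;> ring
  have hB : αY * αX⁻¹ = !![N/M, r' - N*r/M; 0, 1] := by
    rw [hY, hXinv]
    ext i j
    fin_cases i <;> fin_cases j <;>
      simp [Matrix.mul_apply, Fin.sum_univ_two] <;> ring
  -- integer witnesses for the X→Y direction
  obtain ⟨z00, h00⟩ := hIXY 0 0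
  obtain ⟨z01, h01⟩ := hIXY 0 1
  obtain ⟨z11, h11⟩ := hIXY 1 1
  rw [hA] at h00 h01 h11
  simp [Matrix.smul_apply] at h00 h01 h11
  -- integer witnesses for the Y→X direction
  obtain ⟨w00, g00⟩ := hIYX 0 0
  obtain ⟨w01, g01⟩ := hIYX 0 1
  obtain ⟨w11, g11⟩ := hIYX 1 1
  rw [hB] at g00 g01 g11
  simp [Matrix.smul_apply] at g00 g01 g11
  -- dYX ≤ dXY * (M/N)
  have h1 : dYX ≤ dXY * (M/N) := by
    apply hminYX _ (by positivity)
    rw [hB]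
    intro i j
    fin_cases i <;> fin_cases j <;> simp [Matrix.smul_apply]
    · refine ⟨z11, ?_⟩
      have e : dXY * (M / N) * (N / M) = dXY := by field_simp
      rw [e, h11]
    · refine ⟨-z01, ?_⟩
      have e : dXY * (M / N) * (r' - N * r / M) = -(dXY * (r - M * r' / N)) := by
        field_simp; ring
      rw [e, h01]; push_cast; ring
    · exact ⟨0, by simp⟩
    · exact ⟨z00, by linear_combination h00⟩
  -- dXY ≤ dYX * (N/M)
  have h2 : dXY ≤ dYX * (N/M) := by
    apply hminXY _ (by positivity)
    rw [hA]
    intro i j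
    fin_cases i <;> fin_cases j <;> simp [Matrix.smul_apply]
    · refine ⟨w11, ?_⟩
      have e : dYX * (N / M) * (M / N) = dYX := by field_simp
      rw [e, g11]
    · refine ⟨-w01, ?_⟩
      have e : dYX * (N / M) * (r - M * r' / N) = -(dYX * (r' - N * r / M)) := by
        field_simp; ring
      rw [e, g01]; push_cast; ring
    · exact ⟨0, by simp⟩
    · exact ⟨w00, by linear_combination g00⟩
  have heq : dYX = dXY * (M/N) := by
    have h2' : dYX * (N/M) * (M/N) ≤ dYX := by field_simp; exact le_rfl
    have := mul_le_mul_of_nonneg_right h2 (le_of_lt (div_pos hM hN))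
    exact le_antisymm h1 (by nlinarith)
  rw [hA, hB, Matrix.det_smul, Matrix.det_smul, Matrix.det_fin_two_of,
    Matrix.det_fin_two_of, heq]
  simp only [Fintype.card_fin]
  field_simp
  ring
end

section
/- The index of the congruence subgroup Γ₀(n) in SL₂(ℤ) equals ψ(n) = n·∏_{p | n, p prime}(1 + 1/p) (Dedekind's psi function). -/
set_option linter.unusedSectionVars false
set_option linter.unusedVariables false

open Matrix CongruenceSubgroup
open scoped MatrixGroups

namespace Gamma0IndexProof

/-! ### An integer coprime-shifting lemma -/

open Finset in
lemma exists_coprime_shift (a b n : ℤ) (ha : a ≠ 0)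
    (h : ∃ x y z : ℤ, x * a + y * b + z * n = 1) :
    ∃ t : ℤ, IsCoprime a (b + t * n) := by
  obtain ⟨x, y, z, hxyz⟩ := h
  set T : ℕ := (a.natAbs.primeFactors.filter (fun p : ℕ => ¬((p : ℤ) ∣ b))).prod
    (fun p => p) with hT
  refine ⟨(T : ℤ), ?_⟩
  rw [Int.isCoprime_iff_gcd_eq_one]
  by_contra hg
  obtain ⟨p, hp, hpd⟩ := Nat.exists_prime_and_dvd hg
  have hpa : (p : ℤ) ∣ a :=
    dvd_trans (Int.natCast_dvd_natCast.mpr hpd) (Int.gcd_dvd_left _ _)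
  have hpbt : (p : ℤ) ∣ b + T * n :=
    dvd_trans (Int.natCast_dvd_natCast.mpr hpd) (Int.gcd_dvd_right _ _)
  have hpmem : p ∈ a.natAbs.primeFactors :=
    Nat.mem_primeFactors.mpr ⟨hp, Int.natCast_dvd.mp hpa, by simpa using ha⟩
  by_cases hpb : (p : ℤ) ∣ b
  · have hptn : (p : ℤ) ∣ (T : ℤ) * n := (dvd_add_right hpb).mp hpbt
    rcases Int.Prime.dvd_mul' hp hptn with hpT | hpn
    · have hpT' : p ∣ T := Int.natCast_dvd_natCast.mp hpT
      obtain ⟨q, hq, hpq⟩ := (Nat.Prime.prime hp).exists_mem_finset_dvd (hT ▸ hpT')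
      rw [Finset.mem_filter] at hq
      have hq2 : p = q := (Nat.prime_dvd_prime_iff_eq hp
        (Nat.prime_of_mem_primeFactors hq.1)).mp hpq
      exact hq.2 (hq2 ▸ hpb)
    · have h1 : (p : ℤ) ∣ 1 := hxyz ▸
        dvd_add (dvd_add (hpa.mul_left x) (hpb.mul_left y)) (hpn.mul_left z)
      exact hp.one_lt.ne' (by exact_mod_cast Int.eq_one_of_dvd_one (by positivity) h1)
  · have hpT : p ∣ T :=
      Finset.dvd_prod_of_mem _ (by simp only [Finset.mem_filter]; exact ⟨hpmem, hpb⟩)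
    have hpT' : (p : ℤ) ∣ (T : ℤ) := Int.natCast_dvd_natCast.mpr hpT
    exact hpb ((dvd_add_right (hpT'.mul_right n)).mp (by rwa [add_comm] at hpbt))

/-! ### Lifting unimodular pairs mod n to bottom rows of `SL(2, ℤ)` -/

lemma exists_SL2_lift (n : ℕ) [NeZero n] (c d : ZMod n) (h : IsCoprime c d) :
    ∃ g : SL(2, ℤ), ((g 1 0 : ℤ) : ZMod n) = c ∧ ((g 1 1 : ℤ) : ZMod n) = d := by
  obtain ⟨u, v, huv⟩ := h
  have hcast : ∀ e : ZMod n, ((e.val : ℕ) : ZMod n) = e := by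
    intro e; rw [ZMod.natCast_val, ZMod.cast_id]
  have hac : (((c.val : ℤ) + n : ℤ) : ZMod n) = c := by push_cast; simp [hcast c]
  have hbd : (((d.val : ℤ) : ℤ) : ZMod n) = d := by push_cast; simp [hcast d]
  have ha : ((c.val : ℤ) + n : ℤ) ≠ 0 := by
    have h1 : 0 < (n : ℤ) := by exact_mod_cast Nat.pos_of_ne_zero (NeZero.ne n)
    positivity
  have hbez : ∃ x y z : ℤ, x * ((c.val : ℤ) + n) + y * (d.val : ℤ) + z * n = 1 := by
    have hw1 : (((u.val : ℤ) * ((c.val : ℤ) + n) + (v.val : ℤ) * (d.val : ℤ) - 1 : ℤ) : ZMod n)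
        = 0 := by
      push_cast
      simp [hcast]
      rw [huv]
      ring
    obtain ⟨k, hk⟩ := (ZMod.intCast_zmod_eq_zero_iff_dvd _ _).mp hw1
    exact ⟨(u.val : ℤ), (v.val : ℤ), -k, by linarith [hk]⟩
  obtain ⟨t, ht⟩ := exists_coprime_shift _ _ n ha hbez
  obtain ⟨g, hg0, hg1⟩ := ht.exists_SL2_row 1
  refine ⟨g, ?_, ?_⟩
  · rw [hg0, hac]
  · rw [hg1]; push_cast; simp [hcast d]

/-! ### Unimodular pairs, the projective line mod n, and the coset correspondence -/

section

variable (n : ℕ) [NeZero n]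

def UPair : Type := {v : ZMod n × ZMod n // IsCoprime v.1 v.2}

instance : MulAction (ZMod n)ˣ (UPair n) where
  smul u v := ⟨((u : ZMod n) * v.1.1, (u : ZMod n) * v.1.2),
    (isCoprime_mul_unit_left u.isUnit _ _).mpr v.2⟩
  one_smul v := by
    apply Subtype.ext; apply Prod.ext <;> simp [HSMul.hSMul, SMul.smul]
  mul_smul u w v := by
    apply Subtype.ext; apply Prod.ext <;> simp [HSMul.hSMul, SMul.smul] <;> ring

lemma UPair.smul_def (u : (ZMod n)ˣ) (v : UPair n) :
    (u • v).1 = ((u : ZMod n) * v.1.1, (u : ZMod n) * v.1.2) := rfl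

instance : Finite (UPair n) := by unfold UPair; infer_instance

def PL : Type := MulAction.orbitRel.Quotient (ZMod n)ˣ (UPair n)

def redSL : SL(2, ℤ) →* SL(2, ZMod n) :=
  Matrix.SpecialLinearGroup.map (Int.castRingHom (ZMod n))

lemma redSL_apply (g : SL(2, ℤ)) (i j : Fin 2) :
    (redSL n g) i j = ((g i j : ℤ) : ZMod n) := rfl

def brU (M : SL(2, ZMod n)) : UPair n :=
  ⟨(M 1 0, M 1 1), ModularGroup.bottom_row_coprime M⟩

lemma SL2_mul_bottom (M N : SL(2, ZMod n)) (j : Fin 2) :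
    (M * N) 1 j = M 1 0 * N 0 j + M 1 1 * N 1 j := by
  simp [Matrix.SpecialLinearGroup.coe_mul, Matrix.mul_apply, Fin.sum_univ_succ]

def Fmap : SL(2, ℤ) → PL n := fun g => Quotient.mk _ (brU n (redSL n g⁻¹))

lemma Fmap_eq_iff (g h : SL(2, ℤ)) :
    Fmap n g = Fmap n h ↔ ∃ u : (ZMod n)ˣ, u • (brU n (redSL n h⁻¹)) = brU n (redSL n g⁻¹) := by
  unfold Fmap PL
  rw [Quotient.eq]
  exact MulAction.orbitRel_apply.trans (MulAction.mem_orbit_iff)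

lemma gamma0_red (γ : SL(2, ℤ)) (hγ : γ ∈ Gamma0 n) :
    (redSL n γ) 1 0 = 0 := by
  rw [redSL_apply]; exact Gamma0_mem.mp hγ

lemma SL2_det_entries (M : SL(2, ZMod n)) :
    M 0 0 * M 1 1 - M 0 1 * M 1 0 = 1 := by
  have hd := M.2
  rw [Matrix.det_fin_two] at hd
  exact hd

lemma Fmap_wd (g h : SL(2, ℤ)) (hrel : g⁻¹ * h ∈ Gamma0 n) : Fmap n g = Fmap n h := by
  rw [Fmap_eq_iff]
  set γ : SL(2, ℤ) := g⁻¹ * h with hγdef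
  have h10 : (redSL n γ) 1 0 = 0 := gamma0_red n γ hrel
  have hdet : (redSL n γ) 1 1 * (redSL n γ) 0 0 = 1 := by
    have := SL2_det_entries n (redSL n γ)
    rw [h10] at this
    rw [mul_comm]; simpa using this
  have hu : IsUnit ((redSL n γ) 1 1) := IsUnit.of_mul_eq_one _ hdet
  refine ⟨hu.unit, ?_⟩
  apply Subtype.ext
  rw [UPair.smul_def]
  have key : ∀ j : Fin 2, (redSL n g⁻¹) 1 j = (redSL n γ) 1 1 * (redSL n h⁻¹) 1 j := by
    intro j
    have hginv : g⁻¹ = γ * h⁻¹ := by rw [hγdef]; group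
    rw [hginv, _root_.map_mul, SL2_mul_bottom, h10, zero_mul, zero_add]
  have e0 := key 0
  have e1 := key 1
  simp only [brU, IsUnit.unit_spec]
  exact Prod.ext (by rw [e0]) (by rw [e1])

lemma Fmap_inj (g h : SL(2, ℤ)) (heq : Fmap n g = Fmap n h) : g⁻¹ * h ∈ Gamma0 n := by
  rw [Fmap_eq_iff] at heq
  obtain ⟨u, hu⟩ := heq
  have h0 : (redSL n g⁻¹) 1 0 = (u : ZMod n) * (redSL n h⁻¹) 1 0 := by
    have := congrArg (fun v : UPair n => v.1.1) hu
    exact this.symm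
  have h1 : (redSL n g⁻¹) 1 1 = (u : ZMod n) * (redSL n h⁻¹) 1 1 := by
    have := congrArg (fun v : UPair n => v.1.2) hu
    exact this.symm
  rw [Gamma0_mem]
  have hred : ((((g⁻¹ * h) : SL(2,ℤ)) 1 0 : ℤ) : ZMod n) = (redSL n (g⁻¹ * h)) 1 0 := rfl
  rw [hred]
  have hsplit : (g⁻¹ * h : SL(2,ℤ)) = g⁻¹ * (h⁻¹)⁻¹ := by group
  rw [hsplit, _root_.map_mul, SL2_mul_bottom]
  set B := redSL n h⁻¹ with hB
  have hBinv : (B⁻¹ : SL(2, ZMod n)) 0 0 = B 1 1 ∧ (B⁻¹ : SL(2, ZMod n)) 1 0 = -(B 1 0) := by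
    rw [Matrix.SpecialLinearGroup.SL2_inv_expl]
    constructor <;> rfl
  rw [show redSL n (h⁻¹)⁻¹ = B⁻¹ by rw [hB, map_inv]]
  rw [hBinv.1, hBinv.2, h0, h1]
  ring

lemma Fmap_surj : Function.Surjective (Fmap n) := by
  intro x
  obtain ⟨v, rfl⟩ := Quotient.exists_rep x
  obtain ⟨g, hg0, hg1⟩ := exists_SL2_lift n v.1.1 v.1.2 v.2
  refine ⟨g⁻¹, ?_⟩
  unfold Fmap
  congr 1
  apply Subtype.ext
  show ((redSL n g⁻¹⁻¹) 1 0, (redSL n g⁻¹⁻¹) 1 1) = v.1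
  rw [inv_inv]
  exact Prod.ext hg0 hg1

noncomputable def cosetEquiv : (SL(2, ℤ) ⧸ Gamma0 n) ≃ PL n := by
  refine Equiv.ofBijective
    (Quotient.lift (Fmap n) (fun a b hab => Fmap_wd n a b (QuotientGroup.leftRel_apply.mp hab)))
    ⟨?_, ?_⟩
  · intro x y
    induction x using Quotient.ind
    induction y using Quotient.ind
    intro h
    exact (QuotientGroup.eq).mpr (Fmap_inj n _ _ h)
  · intro x
    obtain ⟨g, hg⟩ := Fmap_surj n x
    exact ⟨QuotientGroup.mk g, hg⟩

lemma gamma0_index_eq : (Gamma0 n).index = Nat.card (PL n) := by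
  rw [Subgroup.index_eq_card]
  exact Nat.card_congr (cosetEquiv n)

/-! ### Counting: free unit action -/

lemma stab_eq_bot (v : UPair n) : MulAction.stabilizer (ZMod n)ˣ v = ⊥ := by
  ext u
  simp only [MulAction.mem_stabilizer_iff, Subgroup.mem_bot]
  constructor
  · intro hu
    obtain ⟨x, y, hxy⟩ := v.2
    have h1 : (u : ZMod n) * v.1.1 = v.1.1 := congrArg (fun w : UPair n => w.1.1) hu
    have h2 : (u : ZMod n) * v.1.2 = v.1.2 := congrArg (fun w : UPair n => w.1.2) hu
    have : (u : ZMod n) = 1 := by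
      calc (u : ZMod n) = (u : ZMod n) * (x * v.1.1 + y * v.1.2) := by rw [hxy, mul_one]
      _ = x * ((u : ZMod n) * v.1.1) + y * ((u : ZMod n) * v.1.2) := by ring
      _ = x * v.1.1 + y * v.1.2 := by rw [h1, h2]
      _ = 1 := hxy
    exact Units.ext this
  · rintro rfl; exact one_smul _ v

noncomputable def orbitEquivUnits (v : UPair n) :
    MulAction.orbit (ZMod n)ˣ v ≃ (ZMod n)ˣ :=
  (MulAction.orbitEquivQuotientStabilizer _ v).trans
    ((Subgroup.quotientEquivOfEq (stab_eq_bot n v)).trans QuotientGroup.quotientBot.toEquiv)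

noncomputable def upairEquivProd : UPair n ≃ PL n × (ZMod n)ˣ :=
  (MulAction.selfEquivSigmaOrbits (ZMod n)ˣ (UPair n)).trans
    ((Equiv.sigmaCongrRight (fun ω => orbitEquivUnits n _)).trans (Equiv.sigmaEquivProd _ _))

lemma card_upair_eq : Nat.card (UPair n) = Nat.card (PL n) * n.totient := by
  rw [Nat.card_congr (upairEquivProd n), Nat.card_prod]
  congr 1
  rw [Nat.card_eq_fintype_card, ZMod.card_units_eq_totient]

end

/-! ### Counting: prime powers -/

noncomputable instance (n : ℕ) [NeZero n] : Fintype (UPair n) := Fintype.ofFinite _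

noncomputable def unitsEquivIsUnit (R : Type*) [Monoid R] : Rˣ ≃ {x : R // IsUnit x} where
  toFun u := ⟨u, u.isUnit⟩
  invFun x := x.2.unit
  left_inv u := Units.ext (by simp)
  right_inv x := Subtype.ext (by simp)

lemma zmod_prime_pow_isUnit_or {p k : ℕ} (hp : p.Prime) (hk : 0 < k) (a b : ZMod (p ^ k))
    (h : IsCoprime a b) : IsUnit a ∨ IsUnit b := by
  haveI : NeZero (p ^ k) := ⟨pow_ne_zero _ hp.pos.ne'⟩
  by_contra hab
  push_neg at hab
  obtain ⟨ha, hb⟩ := hab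
  have key : ∀ x : ZMod (p ^ k), ¬IsUnit x → (p : ZMod (p ^ k)) ∣ x := by
    intro x hx
    have hxv : ((x.val : ℕ) : ZMod (p ^ k)) = x := by rw [ZMod.natCast_val, ZMod.cast_id]
    have hcop : ¬ Nat.Coprime x.val (p ^ k) := fun hc =>
      hx (hxv ▸ (ZMod.isUnit_iff_coprime _ _).mpr hc)
    have hdvd : p ∣ x.val := by
      by_contra hpd
      exact hcop (Nat.Coprime.pow_right _ ((Nat.coprime_comm).mp (hp.coprime_iff_not_dvd.mpr hpd)))
    obtain ⟨t, ht⟩ := hdvd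
    exact ⟨(t : ZMod (p ^ k)), by rw [← hxv, ht]; push_cast; ring⟩
  obtain ⟨x, y, hxy⟩ := h
  have hp1 : (p : ZMod (p ^ k)) ∣ 1 := hxy ▸ dvd_add ((key a ha).mul_left x) ((key b hb).mul_left y)
  have : IsUnit ((p : ℕ) : ZMod (p ^ k)) := isUnit_of_dvd_one hp1
  rw [ZMod.isUnit_iff_coprime] at this
  have hpp : p ∣ p ^ k := dvd_pow_self p hk.ne'
  have := Nat.eq_one_of_dvd_coprimes this dvd_rfl hpp
  exact hp.one_lt.ne' this

lemma isUnit_or_isCoprime {R : Type*} [CommRing R] (a b : R) (h : IsUnit a ∨ IsUnit b) :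
    IsCoprime a b := by
  rcases h with h | h
  · obtain ⟨u, rfl⟩ := h
    exact ⟨(u⁻¹ : Rˣ), 0, by simp⟩
  · obtain ⟨u, rfl⟩ := h
    exact ⟨0, (u⁻¹ : Rˣ), by simp⟩

lemma card_upair_prime_pow {p k : ℕ} (hp : p.Prime) (hk : 0 < k) :
    haveI : NeZero (p ^ k) := ⟨pow_ne_zero _ hp.pos.ne'⟩
    Nat.card (UPair (p ^ k)) + p ^ (k - 1) * p ^ (k - 1) = p ^ k * p ^ k := by
  haveI : NeZero (p ^ k) := ⟨pow_ne_zero _ hp.pos.ne'⟩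
  classical
  set R := ZMod (p ^ k)
  have e1 : UPair (p ^ k) ≃ {v : R × R // IsUnit v.1 ∨ IsUnit v.2} :=
    Equiv.subtypeEquivRight (fun v =>
      ⟨zmod_prime_pow_isUnit_or hp hk v.1 v.2, isUnit_or_isCoprime v.1 v.2⟩)
  have e2 : {v : R × R // ¬(IsUnit v.1 ∨ IsUnit v.2)} ≃
      {x : R // ¬IsUnit x} × {x : R // ¬IsUnit x} :=
    (Equiv.subtypeEquivRight (fun v => not_or)).trans
      (Equiv.subtypeProdEquivProd (p := fun x : R => ¬IsUnit x) (q := fun x : R => ¬IsUnit x))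
  have hcardNU : Fintype.card {x : R // ¬IsUnit x} = p ^ (k - 1) := by
    have h1 : Fintype.card {x : R // IsUnit x} = (p ^ k).totient := by
      rw [← Fintype.card_congr (unitsEquivIsUnit R), ZMod.card_units_eq_totient]
    have h2 : Fintype.card {x : R // ¬IsUnit x}
        = Fintype.card R - Fintype.card {x : R // IsUnit x} :=
      Fintype.card_subtype_compl _
    have h3 : Fintype.card R = p ^ k := ZMod.card _
    have h4 : (p ^ k).totient = p ^ (k - 1) * (p - 1) := Nat.totient_prime_pow hp hk
    have h5 : p ^ k = p ^ (k - 1) * p := by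
      conv_lhs => rw [show k = (k - 1) + 1 by omega, pow_succ]
    rw [h2, h1, h3, h4]
    have h6 : p ^ (k - 1) * (p - 1) = p ^ (k - 1) * p - p ^ (k - 1) := by
      rw [Nat.mul_sub, mul_one]
    have h7 : p ^ (k - 1) ≤ p ^ (k - 1) * p :=
      Nat.le_mul_of_pos_right _ hp.pos
    omega
  have hcompl : Fintype.card {v : R × R // IsUnit v.1 ∨ IsUnit v.2} +
      Fintype.card {v : R × R // ¬(IsUnit v.1 ∨ IsUnit v.2)} = Fintype.card (R × R) := by
    rw [Fintype.card_subtype_compl]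
    have hle : Fintype.card {v : R × R // IsUnit v.1 ∨ IsUnit v.2} ≤ Fintype.card (R × R) :=
      Fintype.card_subtype_le _
    omega
  rw [Nat.card_eq_fintype_card, Fintype.card_congr e1]
  rw [Fintype.card_congr e2, Fintype.card_prod, hcardNU] at hcompl
  rw [Fintype.card_prod, ZMod.card] at hcompl
  omega

/-! ### Counting: CRT multiplicativity -/

lemma isCoprime_prod_iff {R S : Type*} [CommSemiring R] [CommSemiring S] (a b : R × S) :
    IsCoprime a b ↔ IsCoprime a.1 b.1 ∧ IsCoprime a.2 b.2 := by
  constructor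
  · intro h
    exact ⟨h.map (RingHom.fst R S), h.map (RingHom.snd R S)⟩
  · rintro ⟨⟨x1, y1, h1⟩, ⟨x2, y2, h2⟩⟩
    exact ⟨(x1, x2), (y1, y2), by
      apply Prod.ext <;> simpa using by assumption⟩

def upairCRT (m n : ℕ) (h : m.Coprime n) : UPair (m * n) ≃ UPair m × UPair n :=
  letI e := ZMod.chineseRemainder h
  { toFun := fun v =>
      (⟨((e v.1.1).1, (e v.1.2).1),
        ((isCoprime_prod_iff _ _).mp (v.2.map (e : ZMod (m*n) →+* ZMod m × ZMod n))).1⟩,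
       ⟨((e v.1.1).2, (e v.1.2).2),
        ((isCoprime_prod_iff _ _).mp (v.2.map (e : ZMod (m*n) →+* ZMod m × ZMod n))).2⟩)
    invFun := fun w =>
      ⟨(e.symm (w.1.1.1, w.2.1.1), e.symm (w.1.1.2, w.2.1.2)), by
        have hc : IsCoprime ((w.1.1.1, w.2.1.1) : ZMod m × ZMod n) (w.1.1.2, w.2.1.2) :=
          (isCoprime_prod_iff _ _).mpr ⟨w.1.2, w.2.2⟩
        exact hc.map (e.symm : ZMod m × ZMod n →+* ZMod (m*n))⟩
    left_inv := fun v => by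
      apply Subtype.ext
      apply Prod.ext <;> simp
    right_inv := fun w => by
      apply Prod.ext <;> (apply Subtype.ext; apply Prod.ext <;> simp) }

lemma card_upair_mul (m n : ℕ) [NeZero m] [NeZero n] (h : m.Coprime n) :
    Nat.card (UPair (m * n)) = Nat.card (UPair m) * Nat.card (UPair n) := by
  haveI : NeZero (m * n) := ⟨mul_ne_zero (NeZero.ne m) (NeZero.ne n)⟩
  rw [Nat.card_congr (upairCRT m n h), Nat.card_prod]

/-! ### The product formula -/

open Finset in
lemma main_count : ∀ n : ℕ, 0 < n →
    (Nat.card (UPair n) : ℚ) =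
      (n.totient : ℚ) * ((n : ℚ) * ∏ p ∈ n.primeFactors, (1 + 1 / (p : ℚ))) := by
  intro n
  induction n using Nat.recOnPosPrimePosCoprime with
  | prime_pow p k hp hk =>
    intro _
    have hpn : Nat.Prime p := hp
    have hcard := card_upair_prime_pow hpn hk
    have hq : (p : ℚ) ≠ 0 := Nat.cast_ne_zero.mpr hpn.pos.ne'
    have hfac : (p ^ k).primeFactors = {p} := Nat.primeFactors_prime_pow hk.ne' hpn
    have hcast : (Nat.card (UPair (p ^ k)) : ℚ) =
        (p : ℚ) ^ k * (p : ℚ) ^ k - (p : ℚ) ^ (k - 1) * (p : ℚ) ^ (k - 1) := by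
      have := congrArg (fun x : ℕ => (x : ℚ)) hcard
      push_cast at this
      linarith
    have hk1 : (p : ℚ) ^ k = (p : ℚ) ^ (k - 1) * (p : ℚ) := by
      conv_lhs => rw [show k = (k - 1) + 1 by omega, pow_succ]
    rw [hfac, Finset.prod_singleton, Nat.totient_prime_pow hpn hk, hcast]
    push_cast [Nat.cast_sub hpn.one_le]
    rw [hk1]
    field_simp
    ring
  | zero => intro h; omega
  | one =>
    intro _
    haveI : NeZero 1 := ⟨one_ne_zero⟩
    haveI : Subsingleton (UPair 1) := by unfold UPair; infer_instance
    haveI : Unique (UPair 1) := uniqueOfSubsingleton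
      ⟨(0, 0), ⟨0, 0, Subsingleton.elim _ _⟩⟩
    have h1 : Nat.card (UPair 1) = 1 := Nat.card_unique
    simp [h1]
  | coprime a b ha hb hab iha ihb =>
    intro _
    haveI : NeZero a := ⟨by omega⟩
    haveI : NeZero b := ⟨by omega⟩
    rw [card_upair_mul a b hab, Nat.cast_mul, iha (by omega), ihb (by omega),
      Nat.totient_mul hab, Nat.primeFactors_mul (by omega) (by omega),
      Finset.prod_union hab.disjoint_primeFactors]
    push_cast
    ring

end Gamma0IndexProof

open Gamma0IndexProof in
theorem Gamma0_index (n : ℕ) (hn : 0 < n) :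
    ((CongruenceSubgroup.Gamma0 n).index : ℚ) =
      (n : ℚ) * ∏ p ∈ n.primeFactors, (1 + 1 / (p : ℚ)) := by
  haveI : NeZero n := ⟨hn.ne'⟩
  have h1 := gamma0_index_eq n
  have h2 := card_upair_eq n
  have h3 := main_count n hn
  have htot : ((n.totient : ℕ) : ℚ) ≠ 0 :=
    Nat.cast_ne_zero.mpr (Nat.totient_pos.mpr hn).ne'
  rw [h2, Nat.cast_mul] at h3
  rw [h1]
  have h4 : ((n.totient : ℕ) : ℚ) * (Nat.card (PL n) : ℚ)
      = ((n.totient : ℕ) : ℚ) * ((n : ℚ) * ∏ p ∈ n.primeFactors, (1 + 1 / (p : ℚ))) := by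
    rw [← h3]; ring
  exact mul_left_cancel₀ htot h4
end

section
/- The cardinality of the projective line ℙ¹(ℤ/nℤ) over ℤ/nℤ equals n·∏_{p | n, p prime}(1 + 1/p). -/
/-- Unimodular rows over `ZMod n`: pairs generating the unit ideal. -/
def UnimodularPair (n : ℕ) : Type :=
  {v : ZMod n × ZMod n // ∃ x y : ZMod n, x * v.1 + y * v.2 = 1}

/-- Unit scaling relation on unimodular pairs. -/
def unitRel (n : ℕ) (v w : UnimodularPair n) : Prop :=
  ∃ u : (ZMod n)ˣ, w.1 = ((u : ZMod n) * v.1.1, (u : ZMod n) * v.1.2)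

/-- The projective line over `ZMod n`. -/
def ProjLineZMod (n : ℕ) : Type := Quot (unitRel n)

instance (n : ℕ) : SMul (ZMod n)ˣ (UnimodularPair n) :=
  ⟨fun u v => ⟨((u : ZMod n) * v.1.1, (u : ZMod n) * v.1.2), by
    obtain ⟨x, y, h⟩ := v.2
    refine ⟨x * ↑u⁻¹, y * ↑u⁻¹, ?_⟩
    have h1 : ((↑u⁻¹ : ZMod n) * ↑u) = 1 := u.inv_mul
    calc x * ↑u⁻¹ * (↑u * v.1.1) + y * ↑u⁻¹ * (↑u * v.1.2)
        = (x * v.1.1 + y * v.1.2) * (↑u⁻¹ * ↑u) := by ring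
      _ = 1 := by rw [h1, h, mul_one]⟩⟩

lemma up_smul_fst {n : ℕ} (u : (ZMod n)ˣ) (v : UnimodularPair n) :
    (u • v).1 = ((u : ZMod n) * v.1.1, (u : ZMod n) * v.1.2) := rfl

instance (n : ℕ) : MulAction (ZMod n)ˣ (UnimodularPair n) where
  one_smul v := Subtype.ext (by rw [up_smul_fst]; simp)
  mul_smul u w v := Subtype.ext (by
    rw [up_smul_fst, up_smul_fst, up_smul_fst]
    simp [Prod.ext_iff, mul_assoc])

instance upFinite (n : ℕ) [NeZero n] : Finite (UnimodularPair n) :=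
  inferInstanceAs (Finite {v : ZMod n × ZMod n // ∃ x y : ZMod n, x * v.1 + y * v.2 = 1})

open MulAction in
lemma card_proj_mul_totient (n : ℕ) (hn : 0 < n) :
    Nat.card (ProjLineZMod n) * n.totient = Nat.card (UnimodularPair n) := by
  haveI : NeZero n := ⟨hn.ne'⟩
  set G := (ZMod n)ˣ
  set X := UnimodularPair n
  -- the quotient is the orbit quotient
  have hrel : ∀ v w : X, unitRel n v w ↔ (orbitRel G X) v w := by
    intro v w
    constructor
    · rintro ⟨u, hu⟩
      have : w = u • v := Subtype.ext hu
      exact (orbitRel G X).symm ⟨u, this.symm⟩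
    · rintro h
      obtain ⟨u, hu⟩ := ((orbitRel G X).symm h)
      exact ⟨u, by rw [← hu]; rfl⟩
  have e1 : ProjLineZMod n ≃ orbitRel.Quotient G X := Quot.congrRight hrel
  -- each orbit is equivalent to G, by freeness
  have hstab : ∀ v : X, stabilizer G v = ⊥ := by
    intro v
    ext u
    simp only [mem_stabilizer_iff, Subgroup.mem_bot]
    constructor
    · intro h
      obtain ⟨x, y, hxy⟩ := v.2
      have h1 : (u : ZMod n) * v.1.1 = v.1.1 ∧ (u : ZMod n) * v.1.2 = v.1.2 := by
        have := congrArg Subtype.val h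
        rw [up_smul_fst] at this
        exact ⟨congrArg Prod.fst this, congrArg Prod.snd this⟩
      have : (u : ZMod n) = 1 := by
        calc (u : ZMod n) = (u : ZMod n) * (x * v.1.1 + y * v.1.2) := by rw [hxy, mul_one]
          _ = x * ((u : ZMod n) * v.1.1) + y * ((u : ZMod n) * v.1.2) := by ring
          _ = x * v.1.1 + y * v.1.2 := by rw [h1.1, h1.2]
          _ = 1 := hxy
      exact Units.ext this
    · rintro rfl; exact one_smul G v
  have e3 : ∀ v : X, orbit G v ≃ G := fun v =>
    (orbitEquivQuotientStabilizer G v).trans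
      ((QuotientGroup.quotientMulEquivOfEq (hstab v)).trans QuotientGroup.quotientBot).toEquiv
  have e2 : X ≃ (orbitRel.Quotient G X) × G :=
    (selfEquivSigmaOrbits G X).trans
      ((Equiv.sigmaCongrRight fun ω => e3 _).trans (Equiv.sigmaEquivProd _ G))
  have hG : Nat.card G = n.totient := by
    rw [Nat.card_eq_fintype_card, ZMod.card_units_eq_totient]
  calc Nat.card (ProjLineZMod n) * n.totient
      = Nat.card (orbitRel.Quotient G X) * Nat.card G := by rw [Nat.card_congr e1, hG]
    _ = Nat.card ((orbitRel.Quotient G X) × G) := (Nat.card_prod _ _).symm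
    _ = Nat.card X := (Nat.card_congr e2).symm

/-- CRT splits unimodular pairs. -/
noncomputable def upEquivProd {a b : ℕ} (h : a.Coprime b) :
    UnimodularPair (a * b) ≃ UnimodularPair a × UnimodularPair b := by
  let e := ZMod.chineseRemainder h
  refine
    { toFun := fun v => (⟨((e v.1.1).1, (e v.1.2).1), ?_⟩, ⟨((e v.1.1).2, (e v.1.2).2), ?_⟩)
      invFun := fun w => ⟨(e.symm (w.1.1.1, w.2.1.1), e.symm (w.1.1.2, w.2.1.2)), ?_⟩
      left_inv := ?_
      right_inv := ?_ }
  · obtain ⟨x, y, hxy⟩ := v.2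
    refine ⟨(e x).1, (e y).1, ?_⟩
    have := congrArg (fun z => (e z).1) hxy
    simpa using this
  · obtain ⟨x, y, hxy⟩ := v.2
    refine ⟨(e x).2, (e y).2, ?_⟩
    have := congrArg (fun z => (e z).2) hxy
    simpa using this
  · obtain ⟨⟨v1, x1, y1, h1⟩, ⟨v2, x2, y2, h2⟩⟩ := w
    refine ⟨e.symm (x1, x2), e.symm (y1, y2), ?_⟩
    have key : ((x1, x2) : ZMod a × ZMod b) * (v1.1, v2.1) + (y1, y2) * (v1.2, v2.2) = 1 := by
      simp [Prod.ext_iff, h1, h2]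
    rw [← map_mul, ← map_mul, ← map_add, key, map_one]
  · rintro ⟨⟨v1, v2⟩, hv⟩
    apply Subtype.ext
    simp
  · rintro ⟨⟨⟨v11, v12⟩, h1⟩, ⟨⟨v21, v22⟩, h2⟩⟩
    simp only [Prod.mk.injEq]
    refine Prod.ext ?_ ?_ <;> apply Subtype.ext <;> simp

lemma isUnimod_iff_prime_pow (p k : ℕ) (hp : p.Prime) (hk : 0 < k) (a b : ZMod (p ^ k)) :
    (∃ x y : ZMod (p ^ k), x * a + y * b = 1) ↔ IsUnit a ∨ IsUnit b := by
  haveI : Fact p.Prime := ⟨hp⟩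
  haveI : NeZero (p ^ k) := ⟨pow_ne_zero _ hp.pos.ne'⟩
  constructor
  · rintro ⟨x, y, hxy⟩
    by_contra hab
    push_neg at hab
    obtain ⟨ha, hb⟩ := hab
    have key : ∀ c : ZMod (p ^ k), ¬IsUnit c → (ZMod.castHom (dvd_pow_self p hk.ne') (ZMod p)) c = 0 := by
      intro c hc
      have h1 : ¬Nat.Coprime c.val (p ^ k) := by
        rw [← ZMod.isUnit_iff_coprime, ZMod.natCast_zmod_val]; exact hc
      have h2 : p ∣ c.val := by
        by_contra h
        exact h1 (Nat.Coprime.pow_right k ((Nat.Prime.coprime_iff_not_dvd hp).mpr h).symm)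
      have : c = ((c.val : ℕ) : ZMod (p ^ k)) := (ZMod.natCast_zmod_val c).symm
      rw [this, map_natCast, ZMod.natCast_eq_zero_iff]
      exact h2
    have := congrArg (ZMod.castHom (dvd_pow_self p hk.ne') (ZMod p)) hxy
    rw [map_add, map_mul, map_mul, key a ha, key b hb, mul_zero, mul_zero, add_zero, map_one] at this
    exact one_ne_zero this.symm
  · rintro (⟨u, rfl⟩ | ⟨u, rfl⟩)
    · exact ⟨↑u⁻¹, 0, by simp [u.inv_mul]⟩
    · exact ⟨0, ↑u⁻¹, by simp [u.inv_mul]⟩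

lemma card_up_prime_pow (p k : ℕ) (hp : p.Prime) (hk : 0 < k) :
    Nat.card (UnimodularPair (p ^ k)) = p ^ (2 * k) - p ^ (2 * (k - 1)) := by
  haveI : Fact p.Prime := ⟨hp⟩
  haveI : NeZero (p ^ k) := ⟨pow_ne_zero _ hp.pos.ne'⟩
  classical
  -- card of nonunits
  have hu : Fintype.card {c : ZMod (p ^ k) // IsUnit c} = (p ^ k).totient := by
    rw [← ZMod.card_units_eq_totient]
    refine Fintype.card_congr (Equiv.symm ?_)
    exact { toFun := fun u => ⟨u, u.isUnit⟩
            invFun := fun c => c.2.unit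
            left_inv := fun u => Units.ext rfl
            right_inv := fun c => Subtype.ext c.2.unit_spec }
  have hnu : Fintype.card {c : ZMod (p ^ k) // ¬IsUnit c} = p ^ (k - 1) := by
    rw [Fintype.card_subtype_compl, hu, ZMod.card, Nat.totient_prime_pow hp hk]
    have h2 : p ^ k = p ^ (k - 1) * p := by
      rw [← pow_succ, Nat.sub_add_cancel hk]
    rw [h2]
    obtain ⟨m, rfl⟩ : ∃ m, p = m + 1 := ⟨p - 1, by have := hp.pos; omega⟩
    simp only [Nat.add_sub_cancel, Nat.mul_succ, Nat.add_sub_cancel_left]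
  have e : UnimodularPair (p ^ k) ≃
      {v : ZMod (p ^ k) × ZMod (p ^ k) // IsUnit v.1 ∨ IsUnit v.2} := by
    refine Equiv.subtypeEquivRight ?_
    intro v
    exact isUnimod_iff_prime_pow p k hp hk v.1 v.2
  rw [Nat.card_congr e, Nat.card_eq_fintype_card]
  have hcompl : Fintype.card {v : ZMod (p ^ k) × ZMod (p ^ k) // ¬(IsUnit v.1 ∨ IsUnit v.2)} =
      p ^ (k - 1) * p ^ (k - 1) := by
    rw [← hnu]
    refine Fintype.card_congr (?_ : _ ≃ {c : ZMod (p^k) // ¬IsUnit c} × {c : ZMod (p^k) // ¬IsUnit c}) |>.trans ?_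
    · exact { toFun := fun v => (⟨v.1.1, fun h => v.2 (Or.inl h)⟩, ⟨v.1.2, fun h => v.2 (Or.inr h)⟩)
              invFun := fun w => ⟨(w.1.1, w.2.1), by rintro (h | h); exacts [w.1.2 h, w.2.2 h]⟩
              left_inv := fun v => rfl
              right_inv := fun w => rfl }
    · rw [Fintype.card_prod]
  have hcc := Fintype.card_subtype_compl (fun v : ZMod (p ^ k) × ZMod (p ^ k) => IsUnit v.1 ∨ IsUnit v.2)
  rw [hcompl] at hcc
  have htot : Fintype.card (ZMod (p ^ k) × ZMod (p ^ k)) = p ^ k * p ^ k := by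
    simp [ZMod.card]
  rw [htot] at hcc
  have hle : Fintype.card {v : ZMod (p ^ k) × ZMod (p ^ k) // IsUnit v.1 ∨ IsUnit v.2} ≤
      p ^ k * p ^ k := htot ▸ Fintype.card_subtype_le _
  have e1 : p ^ (2 * k) = p ^ k * p ^ k := by rw [two_mul, pow_add]
  have e2 : p ^ (2 * (k - 1)) = p ^ (k - 1) * p ^ (k - 1) := by rw [two_mul, pow_add]
  rw [e1, e2]
  set A := p ^ k * p ^ k
  set B := p ^ (k - 1) * p ^ (k - 1)
  omega

lemma card_up_mul {a b : ℕ} (h : a.Coprime b) :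
    Nat.card (UnimodularPair (a * b)) =
      Nat.card (UnimodularPair a) * Nat.card (UnimodularPair b) := by
  rw [Nat.card_congr (upEquivProd h), Nat.card_prod]

lemma card_up_one : Nat.card (UnimodularPair 1) = 1 := by
  haveI : Subsingleton (UnimodularPair 1) :=
    ⟨fun v w => Subtype.ext (Subsingleton.elim _ _)⟩
  haveI : Nonempty (UnimodularPair 1) := ⟨⟨(0, 0), 0, 0, Subsingleton.elim _ _⟩⟩
  exact Nat.card_eq_one_iff_unique.mpr ⟨inferInstance, inferInstance⟩

lemma card_up_rat (n : ℕ) (hn : 0 < n) :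
    (Nat.card (UnimodularPair n) : ℚ) =
      (n : ℚ) ^ 2 * ∏ p ∈ n.primeFactors, (1 - 1 / (p : ℚ) ^ 2) := by
  induction n using Nat.recOnPosPrimePosCoprime with
  | prime_pow p k hp hk =>
    have hP : p.Prime := hp
    have hp0 : (p : ℚ) ≠ 0 := Nat.cast_ne_zero.mpr hP.pos.ne'
    have hkk : 2 * k = 2 * (k - 1) + 2 := by omega
    have hle : p ^ (2 * (k - 1)) ≤ p ^ (2 * k) := Nat.pow_le_pow_right hP.pos (by omega)
    rw [card_up_prime_pow p k hP hk, Nat.primeFactors_prime_pow hk.ne' hP,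
      Finset.prod_singleton, Nat.cast_sub hle]
    push_cast
    rw [show ((p : ℚ) ^ k) ^ 2 = (p : ℚ) ^ (2 * k) by rw [← pow_mul, mul_comm]]
    rw [show (p : ℚ) ^ (2 * k) = (p : ℚ) ^ (2 * (k - 1)) * (p : ℚ) ^ 2 by rw [hkk, pow_add]]
    field_simp
  | zero => exact absurd hn (lt_irrefl 0)
  | one => simp [card_up_one]
  | coprime a b ha hb hab iha ihb =>
    have ha0 : a ≠ 0 := by omega
    have hb0 : b ≠ 0 := by omega
    rw [card_up_mul hab, Nat.cast_mul, iha (by omega), ihb (by omega),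
      Nat.primeFactors_mul ha0 hb0,
      Finset.prod_union (Nat.Coprime.disjoint_primeFactors hab)]
    push_cast
    ring

lemma totient_rat (n : ℕ) (hn : 0 < n) :
    (n.totient : ℚ) = (n : ℚ) * ∏ p ∈ n.primeFactors, (1 - 1 / (p : ℚ)) := by
  have h := Nat.totient_mul_prod_primeFactors n
  have hprod_ne : (∏ p ∈ n.primeFactors, (p : ℚ)) ≠ 0 :=
    Finset.prod_ne_zero_iff.mpr fun p hp =>
      Nat.cast_ne_zero.mpr (Nat.prime_of_mem_primeFactors hp).pos.ne'
  have hfac : ∀ p ∈ n.primeFactors, ((p - 1 : ℕ) : ℚ) = (p : ℚ) * (1 - 1 / (p : ℚ)) := by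
    intro p hp
    have h1 : 1 ≤ p := (Nat.prime_of_mem_primeFactors hp).one_le
    have hp0 : (p : ℚ) ≠ 0 :=
      Nat.cast_ne_zero.mpr (Nat.prime_of_mem_primeFactors hp).pos.ne'
    rw [Nat.cast_sub h1]
    push_cast
    field_simp
  have key : (n.totient : ℚ) * ∏ p ∈ n.primeFactors, (p : ℚ)
      = ((n : ℚ) * ∏ p ∈ n.primeFactors, (1 - 1 / (p : ℚ))) *
          ∏ p ∈ n.primeFactors, (p : ℚ) := by
    calc (n.totient : ℚ) * ∏ p ∈ n.primeFactors, (p : ℚ)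
        = ((n.totient * ∏ p ∈ n.primeFactors, p : ℕ) : ℚ) := by push_cast; ring
      _ = ((n * ∏ p ∈ n.primeFactors, (p - 1) : ℕ) : ℚ) := by rw [h]
      _ = (n : ℚ) * ∏ p ∈ n.primeFactors, ((p - 1 : ℕ) : ℚ) := by push_cast; ring
      _ = (n : ℚ) * ∏ p ∈ n.primeFactors, ((p : ℚ) * (1 - 1 / (p : ℚ))) := by
          rw [Finset.prod_congr rfl hfac]
      _ = _ := by rw [Finset.prod_mul_distrib]; ring
  exact mul_right_cancel₀ hprod_ne key

theorem card_projective_line_zmod (n : ℕ) (hn : 0 < n) :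
    (Nat.card (ProjLineZMod n) : ℚ) =
      (n : ℚ) * ∏ p ∈ n.primeFactors, (1 + 1 / (p : ℚ)) := by
  have h1 := card_proj_mul_totient n hn
  have h2 := card_up_rat n hn
  have h3 := totient_rat n hn
  have hn0 : (n : ℚ) ≠ 0 := Nat.cast_ne_zero.mpr hn.ne'
  have hA : (∏ p ∈ n.primeFactors, (1 - 1 / (p : ℚ))) ≠ 0 := by
    refine Finset.prod_ne_zero_iff.mpr fun p hp => ?_
    have hp1 : (1 : ℚ) < (p : ℚ) := by
      exact_mod_cast (Nat.prime_of_mem_primeFactors hp).one_lt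
    have : (1 : ℚ) / (p : ℚ) < 1 := by
      rw [div_lt_one (by linarith)]; exact hp1
    exact (sub_pos.mpr this).ne'
  have hsplit : ∏ p ∈ n.primeFactors, (1 - 1 / (p : ℚ) ^ 2)
      = (∏ p ∈ n.primeFactors, (1 - 1 / (p : ℚ))) *
          ∏ p ∈ n.primeFactors, (1 + 1 / (p : ℚ)) := by
    rw [← Finset.prod_mul_distrib]
    refine Finset.prod_congr rfl fun p hp => ?_
    have hp0 : (p : ℚ) ≠ 0 :=
      Nat.cast_ne_zero.mpr (Nat.prime_of_mem_primeFactors hp).pos.ne'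
    field_simp
    ring
  have hcast : (Nat.card (ProjLineZMod n) : ℚ) * (n.totient : ℚ)
      = (Nat.card (UnimodularPair n) : ℚ) := by exact_mod_cast congrArg Nat.cast h1
  rw [h3, h2, hsplit] at hcast
  refine mul_right_cancel₀ (mul_ne_zero hn0 hA) ?_
  calc (Nat.card (ProjLineZMod n) : ℚ) * ((n : ℚ) * ∏ p ∈ n.primeFactors, (1 - 1 / (p : ℚ)))
      = (n : ℚ) ^ 2 * ((∏ p ∈ n.primeFactors, (1 - 1 / (p : ℚ))) *
          ∏ p ∈ n.primeFactors, (1 + 1 / (p : ℚ))) := hcast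
    _ = ((n : ℚ) * ∏ p ∈ n.primeFactors, (1 + 1 / (p : ℚ))) *
          ((n : ℚ) * ∏ p ∈ n.primeFactors, (1 - 1 / (p : ℚ))) := by ring
end
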